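/- Let k be a field of characteristic ≠ 2. Then there exist integers i*, j* ≥ 1 such that m_{i*,j*}(k) = ∞ if and only if m_{i,j}(k) = ∞ for all integers i, j ≥ 1. -/

import Mathlib

/-!  Diagonal quadratic forms over a field of characteristic ≠ 2.
In characteristic ≠ 2 every regular quadratic form is isometric to a diagonal form
`⟨d 1, …, d n⟩`, so we model (regular) quadratic forms by their diagonal
coefficient functions. -/

/-- The diagonal quadratic form `⟨d i⟩_{i : ι}` over `k`. -/
noncomputable def diagQF (k : Type) [Field k] {ι : Type} [Fintype ι] (d : ι → k) :
    QuadraticForm k (ι → k) :=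
  QuadraticMap.weightedSumSquares k d

/-- Isometry of (diagonal) quadratic forms. -/
def FormIsom (k : Type) [Field k] {ι κ : Type} [Fintype ι] [Fintype κ]
    (d : ι → k) (e : κ → k) : Prop :=
  QuadraticMap.Equivalent (diagQF k d) (diagQF k e)

/-- The orthogonal sum of `m` copies of the hyperbolic plane `⟨1, -1⟩`. -/
def hypForm (k : Type) [Field k] (m : ℕ) : Fin (2 * m) → k :=
  fun j => if j.val % 2 = 0 then 1 else -1

/-- The Witt index of a (diagonal) form: the largest `m` such that the form is isometric
to `m·ℍ ⟂ (rest)` for some diagonal form `rest`. -/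
noncomputable def wittIndex (k : Type) [Field k] {ι : Type} [Fintype ι] (d : ι → k) : ℕ :=
  sSup {m : ℕ | ∃ (s : ℕ) (e : Fin s → k), FormIsom k d (Sum.elim (hypForm k m) e)}
/-- The u-invariant of a field: the supremum of the dimensions of anisotropic regular
quadratic forms over `k` (`⊤` if unbounded). -/
noncomputable def uInv (k : Type) [Field k] : ℕ∞ :=
  sSup {N : ℕ∞ | ∃ n : ℕ, N = n ∧
    ∃ d : Fin n → k, (∀ t, d t ≠ 0) ∧ (diagQF k d).Anisotropic}

/-- The refined m-invariant `m_{i,j}(k)`: the least dimension (`⊤` if there is none) of a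
regular quadratic form `q` of dimension ≥ 1 over `k` with `i_W(q) < j` such that
`i_W(q ⟂ σ) ≥ j` for every `i`-dimensional regular form `σ` over `k`. -/
noncomputable def mInv (k : Type) [Field k] (i j : ℕ) : ℕ∞ :=
  sInf {N : ℕ∞ | ∃ n : ℕ, N = n ∧ 1 ≤ n ∧
    ∃ d : Fin n → k, (∀ t, d t ≠ 0) ∧ wittIndex k d < j ∧
      ∀ σ : Fin i → k, (∀ t, σ t ≠ 0) → j ≤ wittIndex k (Sum.elim d σ)}

namespace M17
variable {k : Type} [Field k]

lemma diagQF_apply {ι : Type} [Fintype ι] (d : ι → k) (x : ι → k) :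
    diagQF k d x = ∑ i, d i * (x i * x i) := by
  simp [diagQF, QuadraticMap.weightedSumSquares_apply, smul_eq_mul]

lemma diagQF_elim_apply {ι κ : Type} [Fintype ι] [Fintype κ] (d : ι → k) (e : κ → k)
    (x : ι ⊕ κ → k) :
    diagQF k (Sum.elim d e) x
      = diagQF k d (x ∘ Sum.inl) + diagQF k e (x ∘ Sum.inr) := by
  simp [diagQF_apply, Fintype.sum_sum_type]

/-- builder -/
lemma mkIsom {ι κ : Type} [Fintype ι] [Fintype κ] (d : ι → k) (e : κ → k)
    (f : (ι → k) ≃ₗ[k] (κ → k)) (h : ∀ x, diagQF k e (f x) = diagQF k d x) :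
    FormIsom k d e :=
  ⟨{ f with map_app' := h }⟩

lemma FormIsom.refl {ι : Type} [Fintype ι] (d : ι → k) : FormIsom k d d :=
  QuadraticMap.Equivalent.refl _

lemma FormIsom.symm {ι κ : Type} [Fintype ι] [Fintype κ] {d : ι → k} {e : κ → k}
    (h : FormIsom k d e) : FormIsom k e d := QuadraticMap.Equivalent.symm h

lemma FormIsom.trans {ι κ ν : Type} [Fintype ι] [Fintype κ] [Fintype ν]
    {d : ι → k} {e : κ → k} {g : ν → k}
    (h : FormIsom k d e) (h' : FormIsom k e g) : FormIsom k d g :=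
  QuadraticMap.Equivalent.trans h h'

/-- reindexing isometry -/
lemma isom_reindex {ι κ : Type} [Fintype ι] [Fintype κ] (σ : ι ≃ κ) (d : ι → k) (e : κ → k)
    (h : ∀ i, d i = e (σ i)) : FormIsom k d e := by
  refine mkIsom d e (LinearEquiv.funCongrLeft k k σ.symm) (fun x => ?_)
  rw [diagQF_apply, diagQF_apply]
  refine (Fintype.sum_equiv σ (fun i => d i * (x i * x i))
    (fun j => e j * ((LinearEquiv.funCongrLeft k k σ.symm) x j *
      (LinearEquiv.funCongrLeft k k σ.symm) x j)) (fun i => ?_)).symm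
  simp [LinearEquiv.funCongrLeft_apply, LinearMap.funLeft_apply, h i]

lemma isom_card {ι κ : Type} [Fintype ι] [Fintype κ] {d : ι → k} {e : κ → k}
    (h : FormIsom k d e) : Fintype.card ι = Fintype.card κ := by
  obtain ⟨f⟩ := h
  have := f.toLinearEquiv.finrank_eq
  simpa [Module.finrank_pi] using this

/-- linear version of sumArrowEquivProdArrow -/
noncomputable def sumArrowLE (ι κ : Type) :
    ((ι ⊕ κ) → k) ≃ₗ[k] (ι → k) × (κ → k) :=
  { Equiv.sumArrowEquivProdArrow ι κ k with
    map_add' := fun x y => Prod.ext (funext fun _ => rfl) (funext fun _ => rfl)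
    map_smul' := fun c x => Prod.ext (funext fun _ => rfl) (funext fun _ => rfl) }

/-- congruence for orthogonal sums -/
lemma isom_sumCongr {ι κ ι' κ' : Type} [Fintype ι] [Fintype κ] [Fintype ι'] [Fintype κ']
    {d : ι → k} {e : κ → k} {d' : ι' → k} {e' : κ' → k}
    (h1 : FormIsom k d d') (h2 : FormIsom k e e') :
    FormIsom k (Sum.elim d e) (Sum.elim d' e') := by
  obtain ⟨F⟩ := h1
  obtain ⟨G⟩ := h2
  refine mkIsom _ _
    ((sumArrowLE ι κ).trans ((F.toLinearEquiv.prodCongr G.toLinearEquiv).trans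
      (sumArrowLE ι' κ').symm)) (fun x => ?_)
  have key : ∀ (u : ι' → k) (v : κ' → k),
      diagQF k (Sum.elim d' e') ((sumArrowLE ι' κ').symm (u, v))
        = diagQF k d' u + diagQF k e' v := by
    intro u v
    rw [diagQF_elim_apply]
    rfl
  have : ((sumArrowLE ι κ).trans ((F.toLinearEquiv.prodCongr G.toLinearEquiv).trans
      (sumArrowLE ι' κ').symm)) x
      = (sumArrowLE ι' κ').symm (F.toLinearEquiv (x ∘ Sum.inl), G.toLinearEquiv (x ∘ Sum.inr)) := rfl
  rw [this, key, diagQF_elim_apply]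
  have hF : diagQF k d' (F.toLinearEquiv (x ∘ Sum.inl)) = diagQF k d (x ∘ Sum.inl) :=
    F.map_app _
  have hG : diagQF k e' (G.toLinearEquiv (x ∘ Sum.inr)) = diagQF k e (x ∘ Sum.inr) :=
    G.map_app _
  rw [hF, hG]


lemma diagQF_single_apply (c : k) (y : Fin 1 → k) :
    diagQF k (fun _ : Fin 1 => c) y = c * (y 0 * y 0) := by
  rw [diagQF_apply, Fin.sum_univ_one]

lemma anis_of_isom {ι κ : Type} [Fintype ι] [Fintype κ] {d : ι → k} {e : κ → k}
    (h : FormIsom k d e) (ha : (diagQF k e).Anisotropic) : (diagQF k d).Anisotropic := by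
  obtain ⟨f⟩ := h
  intro x hx
  have h1 : diagQF k e (f.toLinearEquiv x) = 0 := (f.map_app x).trans hx
  have h2 : f.toLinearEquiv x = 0 := ha _ h1
  exact (LinearEquiv.map_eq_zero_iff f.toLinearEquiv).1 h2

lemma anis_iff_of_isom {ι κ : Type} [Fintype ι] [Fintype κ] {d : ι → k} {e : κ → k}
    (h : FormIsom k d e) :
    (diagQF k d).Anisotropic ↔ (diagQF k e).Anisotropic :=
  ⟨anis_of_isom h.symm, anis_of_isom h⟩

lemma rep_of_isom {ι κ : Type} [Fintype ι] [Fintype κ] {d : ι → k} {e : κ → k}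
    (h : FormIsom k d e) {a : k} (hx : ∃ x, diagQF k d x = a) : ∃ y, diagQF k e y = a := by
  obtain ⟨f⟩ := h
  obtain ⟨x, hx⟩ := hx
  exact ⟨f.toLinearEquiv x, (f.map_app x).trans hx⟩

lemma anis_nonzero {ι : Type} [Fintype ι] [DecidableEq ι] {d : ι → k}
    (h : (diagQF k d).Anisotropic) (t : ι) : d t ≠ 0 := by
  intro h0
  have hq : diagQF k d (Pi.single t 1) = 0 := by
    rw [diagQF_apply]
    rw [Finset.sum_eq_single t]
    · simp [h0]
    · intro b _ hb; simp [Pi.single_apply, hb]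
    · intro hb; simp at hb
  have := h _ hq
  have := congrFun this t
  simp at this

lemma anis_single {c : k} (hc : c ≠ 0) : (diagQF k (fun _ : Fin 1 => c)).Anisotropic := by
  intro x hx
  rw [diagQF_single_apply] at hx
  have : x 0 = 0 := by
    rcases mul_eq_zero.1 hx with h | h
    · exact absurd h hc
    · rcases mul_eq_zero.1 h with h | h <;> exact h
  funext t
  have ht : t = 0 := Subsingleton.elim _ _
  rw [ht]; assumption

/-- scaling a one-dimensional form by a square -/
lemma isom_single {c a t : k} (ht : t ≠ 0) (h : a = c * (t * t)) :
    FormIsom k (fun _ : Fin 1 => c) (fun _ : Fin 1 => a) := by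
  refine mkIsom _ _ ?_ ?_
  · exact
    { toFun := fun y => t⁻¹ • y
      invFun := fun y => t • y
      map_add' := fun x y => by simp [smul_add]
      map_smul' := fun r x => by funext j; simp [Pi.smul_apply, smul_eq_mul]; ring
      left_inv := fun x => by funext j; simp [Pi.smul_apply, smul_eq_mul]; field_simp
      right_inv := fun x => by funext j; simp [Pi.smul_apply, smul_eq_mul]; field_simp }
  · intro x
    rw [diagQF_single_apply, diagQF_single_apply]
    show a * ((t⁻¹ • x) 0 * (t⁻¹ • x) 0) = c * (x 0 * x 0)
    simp only [Pi.smul_apply, smul_eq_mul, h]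
    field_simp

lemma isom_toFin {κ : Type} [Fintype κ] (E : κ → k) (s : ℕ) (h : Fintype.card κ = s) :
    ∃ e : Fin s → k, FormIsom k E e ∧ ∀ t, ∃ i, e t = E i := by
  subst h
  refine ⟨E ∘ (Fintype.equivFin κ).symm, ?_, fun t => ⟨_, rfl⟩⟩
  exact isom_reindex (Fintype.equivFin κ) E (E ∘ (Fintype.equivFin κ).symm)
    (fun i => by simp)

lemma isom_empty_left {α κ : Type} [Fintype α] [IsEmpty α] [Fintype κ] (f : α → k)
    (e : κ → k) : FormIsom k (Sum.elim f e) e := by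
  refine isom_reindex (Equiv.emptySum α κ) _ _ (fun i => ?_)
  cases i with
  | inl a => exact (IsEmpty.false a).elim
  | inr b => rfl

lemma isom_assoc {α β γ : Type} [Fintype α] [Fintype β] [Fintype γ]
    (a : α → k) (b : β → k) (c : γ → k) :
    FormIsom k (Sum.elim (Sum.elim a b) c) (Sum.elim a (Sum.elim b c)) := by
  refine isom_reindex (Equiv.sumAssoc α β γ) _ _ (fun i => ?_)
  rcases i with (i | i) | i <;> rfl

lemma isom_comm {α β : Type} [Fintype α] [Fintype β] (a : α → k) (b : β → k) :
    FormIsom k (Sum.elim a b) (Sum.elim b a) := by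
  refine isom_reindex (Equiv.sumComm α β) _ _ (fun i => ?_)
  rcases i with i | i <;> rfl

/-- splitting the last coordinate -/
def gsplit (n : ℕ) : Fin n ⊕ Fin 1 ≃ Fin (n + 1) where
  toFun := Sum.elim Fin.castSucc (fun _ => Fin.last n)
  invFun := fun j => if h : j.val < n then Sum.inl ⟨j.val, h⟩ else Sum.inr 0
  left_inv := by
    rintro (t | t)
    · simp [Fin.castSucc_lt_last t, t.isLt]
    · have h1 : ¬ ((Fin.last n).val < n) := by simp [Fin.last]
      simp only [Sum.elim_inr, h1, dif_neg, not_false_iff]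
      exact (dif_neg h1).trans (congrArg Sum.inr (Subsingleton.elim _ _))
  right_inv := by
    intro j
    by_cases h : j.val < n
    · simp [h]
    · simp only [h, dif_neg, not_false_iff, Sum.elim_inr]
      have hj := j.isLt
      exact Fin.ext (by simp [Fin.last]; omega)

def hypAddEquiv (a b : ℕ) : Fin (2 * a) ⊕ Fin (2 * b) ≃ Fin (2 * (a + b)) where
  toFun := Sum.elim (fun t => ⟨t.val, by omega⟩) (fun t => ⟨2 * a + t.val, by omega⟩)
  invFun := fun j => if h : j.val < 2 * a then Sum.inl ⟨j.val, h⟩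
    else Sum.inr ⟨j.val - 2 * a, by omega⟩
  left_inv := by
    rintro (t | t)
    · simp [t.isLt]
    · have h1 : ¬ (2 * a + t.val < 2 * a) := by omega
      simp [h1]
  right_inv := by
    intro j
    by_cases h : j.val < 2 * a
    · simp [h]
    · simp only [h, dif_neg, not_false_iff, Sum.elim_inr]
      have hj := j.isLt
      exact Fin.ext (by simp; omega)

lemma hyp_congr {m m' : ℕ} (h : m = m') : FormIsom k (hypForm k m) (hypForm k m') := by
  subst h; exact FormIsom.refl _

lemma hyp_add (a b : ℕ) :
    FormIsom k (hypForm k (a + b)) (Sum.elim (hypForm k a) (hypForm k b)) := by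
  refine (isom_reindex (hypAddEquiv a b) _ _ (fun i => ?_)).symm
  rcases i with t | t
  · rfl
  · show (if t.val % 2 = 0 then (1:k) else -1) = (if (2 * a + t.val) % 2 = 0 then 1 else -1)
    have h2 : t.val % 2 = (2 * a + t.val) % 2 := by omega
    rw [h2]

def hypOneEquiv : Fin 1 ⊕ Fin 1 ≃ Fin (2 * 1) where
  toFun := Sum.elim (fun _ => (0 : Fin 2)) (fun _ => (1 : Fin 2))
  invFun := fun j => if j.val = 0 then Sum.inl 0 else Sum.inr 0
  left_inv := by
    rintro (t | t) <;> simp <;> congr <;> exact Subsingleton.elim _ _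
  right_inv := by
    intro j
    rcases j with ⟨jv, hj⟩
    interval_cases jv <;> simp

lemma hyp_one : FormIsom k (hypForm k 1)
    (Sum.elim (fun _ : Fin 1 => (1:k)) (fun _ : Fin 1 => (-1:k))) := by
  refine (isom_reindex hypOneEquiv _ _ (fun i => ?_)).symm
  rcases i with t | t
  · rfl
  · rfl

lemma hyp_isotropic {κ : Type} [Fintype κ] (r : ℕ) (hr : 1 ≤ r) (e : κ → k) :
    ¬ (diagQF k (Sum.elim (hypForm k r) e)).Anisotropic := by
  have h1 : FormIsom k (Sum.elim (hypForm k r) e)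
      (Sum.elim (hypForm k 1) (Sum.elim (hypForm k (r - 1)) e)) :=
    FormIsom.trans (isom_sumCongr (FormIsom.trans (hyp_congr (by omega : r = 1 + (r-1)))
      (hyp_add 1 (r-1))) (FormIsom.refl e)) (isom_assoc _ _ _)
  intro ha
  have ha' := anis_of_isom h1.symm ha
  set x : Fin (2 * 1) ⊕ (Fin (2 * (r-1)) ⊕ κ) → k :=
    Sum.elim (fun _ => 1) 0 with hx
  have hq : diagQF k (Sum.elim (hypForm k 1) (Sum.elim (hypForm k (r - 1)) e)) x = 0 := by
    rw [diagQF_elim_apply]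
    have h2 : diagQF k (Sum.elim (hypForm k (r-1)) e) (x ∘ Sum.inr) = 0 := by
      have hz : (x ∘ Sum.inr) = 0 := rfl
      rw [hz, map_zero]
    rw [h2, add_zero]
    have h3 : (x ∘ Sum.inl) = fun _ : Fin (2*1) => (1:k) := rfl
    rw [h3, diagQF_apply]
    have h4 : (∑ i : Fin (2*1), hypForm k 1 i * ((1:k) * 1))
        = hypForm k 1 0 * ((1:k) * 1) + hypForm k 1 1 * ((1:k) * 1) :=
      Fin.sum_univ_two (f := fun i : Fin 2 => hypForm k 1 i * ((1:k) * 1))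
    rw [h4]
    have e0 : hypForm k 1 0 = 1 := rfl
    have e1 : hypForm k 1 1 = -1 := rfl
    rw [e0, e1]; ring
  have h5 := ha' _ hq
  have h6 := congrFun h5 (Sum.inl 0)
  simp [hx] at h6


/-! ### Bilinear form machinery and reflections -/

/-- the (half-)polar bilinear form of a diagonal form -/
noncomputable def bil {ι : Type} [Fintype ι] (c w x : ι → k) : k :=
  ∑ i, c i * (w i * x i)

lemma bil_self {ι : Type} [Fintype ι] (c w : ι → k) : bil c w w = diagQF k c w := by
  rw [bil, diagQF_apply]

lemma bil_comm {ι : Type} [Fintype ι] (c w x : ι → k) : bil c w x = bil c x w := by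
  refine Finset.sum_congr rfl fun i _ => by ring

lemma bil_add_right {ι : Type} [Fintype ι] (c w x y : ι → k) :
    bil c w (x + y) = bil c w x + bil c w y := by
  rw [bil, bil, bil, ← Finset.sum_add_distrib]
  exact Finset.sum_congr rfl fun i _ => by simp [Pi.add_apply]; ring

lemma bil_smul_right {ι : Type} [Fintype ι] (c w x : ι → k) (t : k) :
    bil c w (t • x) = t * bil c w x := by
  rw [bil, bil, Finset.mul_sum]
  exact Finset.sum_congr rfl fun i _ => by simp [Pi.smul_apply, smul_eq_mul]; ring

lemma bil_sub_right {ι : Type} [Fintype ι] (c w x y : ι → k) :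
    bil c w (x - y) = bil c w x - bil c w y := by
  have h1 : x - y = x + (-1 : k) • y := by funext j; simp [sub_eq_add_neg]
  rw [h1, bil_add_right, bil_smul_right]; ring

lemma bil_add_left {ι : Type} [Fintype ι] (c w x y : ι → k) :
    bil c (w + x) y = bil c w y + bil c x y := by
  rw [bil_comm, bil_add_right, bil_comm c y w, bil_comm c y x]

lemma bil_sub_left {ι : Type} [Fintype ι] (c w x y : ι → k) :
    bil c (w - x) y = bil c w y - bil c x y := by
  rw [bil_comm, bil_sub_right, bil_comm c y w, bil_comm c y x]

lemma qf_expand {ι : Type} [Fintype ι] (c x w : ι → k) (t : k) :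
    diagQF k c (x + t • w)
      = diagQF k c x + 2 * t * bil c w x + t ^ 2 * diagQF k c w := by
  rw [diagQF_apply, diagQF_apply, diagQF_apply, bil, Finset.mul_sum, Finset.mul_sum,
    ← Finset.sum_add_distrib, ← Finset.sum_add_distrib]
  refine Finset.sum_congr rfl fun i _ => ?_
  simp only [Pi.add_apply, Pi.smul_apply, smul_eq_mul]
  ring

lemma qf_add_expand {ι : Type} [Fintype ι] (c x w : ι → k) :
    diagQF k c (x + w) = diagQF k c x + 2 * bil c w x + diagQF k c w := by
  have := qf_expand c x w 1
  simpa using this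

lemma qf_sub_expand {ι : Type} [Fintype ι] (c x w : ι → k) :
    diagQF k c (x - w) = diagQF k c x - 2 * bil c w x + diagQF k c w := by
  have := qf_expand c x w (-1)
  have h1 : x + (-1 : k) • w = x - w := by funext j; simp; ring
  rw [h1] at this
  rw [this]; ring

/-- reflection in the hyperplane orthogonal to `w` (the identity if `w` is isotropic) -/
noncomputable def reflMap {ι : Type} [Fintype ι] (c w : ι → k) : (ι → k) →ₗ[k] (ι → k) where
  toFun x := x - ((2 * bil c w x) / diagQF k c w) • w
  map_add' x y := by
    funext j
    simp only [Pi.add_apply, Pi.sub_apply, Pi.smul_apply, smul_eq_mul, bil_add_right]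
    have hr : 2 * (bil c w x + bil c w y) = 2 * bil c w x + 2 * bil c w y := by ring
    rw [hr, add_div]
    ring
  map_smul' t x := by
    funext j
    simp only [Pi.smul_apply, Pi.sub_apply, smul_eq_mul, bil_smul_right, RingHom.id_apply]
    rw [show 2 * (t * bil c w x) = t * (2 * bil c w x) by ring, mul_div_assoc]
    ring

lemma reflMap_apply {ι : Type} [Fintype ι] (c w x : ι → k) :
    reflMap c w x = x - ((2 * bil c w x) / diagQF k c w) • w := rfl

lemma reflMap_involutive {ι : Type} [Fintype ι] (c w : ι → k) :
    Function.Involutive (reflMap c w) := by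
  intro x
  by_cases hw : diagQF k c w = 0
  · simp [reflMap_apply, hw]
  · rw [reflMap_apply, reflMap_apply]
    have hb : bil c w (x - ((2 * bil c w x) / diagQF k c w) • w)
        = bil c w x - ((2 * bil c w x) / diagQF k c w) * diagQF k c w := by
      rw [bil_sub_right, bil_smul_right, bil_self]
    rw [hb]
    funext j
    simp only [Pi.sub_apply, Pi.smul_apply, smul_eq_mul]
    field_simp
    ring

lemma reflMap_qf {ι : Type} [Fintype ι] (c w : ι → k) (x : ι → k) :
    diagQF k c (reflMap c w x) = diagQF k c x := by
  by_cases hw : diagQF k c w = 0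
  · simp [reflMap_apply, hw]
  · rw [reflMap_apply, sub_eq_add_neg, ← neg_smul, qf_expand]
    field_simp
    ring

noncomputable def reflEquiv {ι : Type} [Fintype ι] (c w : ι → k) : (ι → k) ≃ₗ[k] (ι → k) :=
  LinearEquiv.ofInvolutive (reflMap c w) (reflMap_involutive c w)

lemma reflEquiv_apply {ι : Type} [Fintype ι] (c w x : ι → k) :
    reflEquiv c w x = x - ((2 * bil c w x) / diagQF k c w) • w := rfl

lemma reflEquiv_qf {ι : Type} [Fintype ι] (c w : ι → k) (x : ι → k) :
    diagQF k c (reflEquiv c w x) = diagQF k c x := reflMap_qf c w x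

/-- Witt's lemma: two vectors representing the same nonzero value are related by an
isometry of the form. -/
lemma sendTo {ι : Type} [Fintype ι] (h2 : (2:k) ≠ 0) (c u v : ι → k) {a : k} (ha : a ≠ 0)
    (hu : diagQF k c u = a) (hv : diagQF k c v = a) :
    ∃ g : (ι → k) ≃ₗ[k] (ι → k), (∀ x, diagQF k c (g x) = diagQF k c x) ∧ g v = u := by
  by_cases hd : diagQF k c (u - v) ≠ 0
  · refine ⟨reflEquiv c (u - v), fun x => reflEquiv_qf c (u-v) x, ?_⟩
    have key : 2 * bil c (u - v) v = - diagQF k c (u - v) := by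
      rw [qf_sub_expand, bil_sub_left, bil_self, bil_comm c u v, hu, hv]
      ring
    rw [reflEquiv_apply, key]
    rw [neg_div, div_self hd]
    funext j
    simp only [Pi.sub_apply, Pi.smul_apply, smul_eq_mul]
    ring
  · push_neg at hd
    have hB : 2 * bil c u v = 2 * a := by
      have h2' := qf_sub_expand c u v
      rw [hd, hu, hv, bil_comm c v u] at h2'
      linear_combination h2'
    have hsum : diagQF k c (u + v) = 4 * a := by
      have h1 := qf_add_expand c v u
      have h3 : v + u = u + v := by abel
      rw [h3, hu, hv] at h1
      linear_combination h1 + hB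
    have h4a : (4 : k) * a ≠ 0 := by
      have h4 : (4 : k) = 2 * 2 := by norm_num
      rw [h4]
      exact mul_ne_zero (mul_ne_zero h2 h2) ha
    refine ⟨(reflEquiv c (u + v)).trans (reflEquiv c u), ?_, ?_⟩
    · intro x
      rw [LinearEquiv.trans_apply, reflEquiv_qf, reflEquiv_qf]
    · rw [LinearEquiv.trans_apply]
      have key1 : 2 * bil c (u + v) v = diagQF k c (u + v) := by
        rw [bil_add_left, bil_self, hv, hsum]
        linear_combination hB
      have step1 : reflEquiv c (u + v) v = -u := by
        rw [reflEquiv_apply, key1, div_self (by rw [hsum]; exact h4a)]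
        funext j
        simp only [Pi.sub_apply, Pi.smul_apply, smul_eq_mul, Pi.add_apply, Pi.neg_apply]
        ring
      rw [step1]
      have key2 : bil c u (-u) = -a := by
        have hneg : -u = (0 : ι → k) - u := by funext j; simp
        rw [hneg, bil_sub_right, bil_self, hu]
        simp [bil]
      rw [reflEquiv_apply, key2, hu]
      have hcoef : 2 * -a / a = -2 := by field_simp
      rw [hcoef]
      funext j
      simp only [Pi.sub_apply, Pi.smul_apply, smul_eq_mul, Pi.neg_apply]
      ring


lemma bil_elim_split {α β : Type} [Fintype α] [Fintype β] (cA : α → k) (cB : β → k)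
    (x y : α ⊕ β → k) :
    bil (Sum.elim cA cB) x y
      = bil cA (x ∘ Sum.inl) (y ∘ Sum.inl) + bil cB (x ∘ Sum.inr) (y ∘ Sum.inr) := by
  rw [bil, bil, bil, Fintype.sum_sum_type]
  rfl

lemma diag_unit_value {α : Type} [Fintype α] (a : k) (dA : α → k) :
    diagQF k (Sum.elim (fun _ : Fin 1 => a) dA) (Sum.elim (fun _ => 1) 0) = a := by
  rw [diagQF_elim_apply]
  have h1 : (Sum.elim (fun _ : Fin 1 => (1:k)) (0 : α → k) ∘ Sum.inl)
      = fun _ : Fin 1 => (1:k) := rfl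
  have h2 : (Sum.elim (fun _ : Fin 1 => (1:k)) (0 : α → k) ∘ Sum.inr) = (0 : α → k) := rfl
  rw [h1, h2, diagQF_single_apply, map_zero]
  ring

lemma inr_supported {α β : Type} [Fintype α] [Fintype β] {a : k} (ha : a ≠ 0)
    (h2 : (2:k) ≠ 0) {dA : α → k} {dB : β → k}
    (M : (Fin 1 ⊕ α → k) ≃ₗ[k] (Fin 1 ⊕ β → k))
    (hM : ∀ x, diagQF k (Sum.elim (fun _ : Fin 1 => a) dB) (M x)
      = diagQF k (Sum.elim (fun _ : Fin 1 => a) dA) x)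
    (hMu : M (Sum.elim (fun _ => 1) 0) = Sum.elim (fun _ => 1) 0)
    (x : α → k) :
    M (Sum.elim (0 : Fin 1 → k) x) = Sum.elim (0 : Fin 1 → k) ((M (Sum.elim (0 : Fin 1 → k) x)) ∘ Sum.inr) := by
  set cA := Sum.elim (fun _ : Fin 1 => a) dA with hcA
  set cB := Sum.elim (fun _ : Fin 1 => a) dB with hcB
  set uA : Fin 1 ⊕ α → k := Sum.elim (fun _ => 1) 0 with huA
  set uB : Fin 1 ⊕ β → k := Sum.elim (fun _ => 1) 0 with huB
  set y := M (Sum.elim (0 : Fin 1 → k) x) with hy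
  have hpol : diagQF k cB (uB + y) = diagQF k cA (uA + Sum.elim (0 : Fin 1 → k) x) := by
    rw [← hMu, ← map_add M]
    exact hM _
  have e1 : diagQF k cB (uB + y) = diagQF k cB uB + 2 * bil cB y uB + diagQF k cB y := by
    exact qf_add_expand cB uB y
  have e2 : diagQF k cA (uA + Sum.elim (0 : Fin 1 → k) x)
      = diagQF k cA uA + 2 * bil cA (Sum.elim (0 : Fin 1 → k) x) uA + diagQF k cA (Sum.elim (0 : Fin 1 → k) x) := by
    exact qf_add_expand cA uA (Sum.elim (0 : Fin 1 → k) x)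
  have hq : diagQF k cB y = diagQF k cA (Sum.elim (0 : Fin 1 → k) x) := hM _
  have hua : diagQF k cA uA = a := diag_unit_value a dA
  have hub : diagQF k cB uB = a := diag_unit_value a dB
  have hbilA : bil cA (Sum.elim (0 : Fin 1 → k) x) uA = 0 := by
    rw [hcA, bil_elim_split]
    have z1 : ((Sum.elim (0 : Fin 1 → k) x) ∘ Sum.inl) = (0 : Fin 1 → k) := rfl
    have z2 : (uA ∘ Sum.inr) = (0 : α → k) := rfl
    rw [z1, z2]
    simp [bil]
  have hbilB : bil cB y uB = a * y (Sum.inl 0) := by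
    rw [hcB, bil_elim_split]
    have z2 : (uB ∘ Sum.inr) = (0 : β → k) := rfl
    rw [z2]
    have z3 : bil dB (y ∘ Sum.inr) 0 = 0 := by simp [bil]
    rw [z3, add_zero, bil, Fin.sum_univ_one]
    have z4 : (uB ∘ Sum.inl) 0 = 1 := rfl
    show a * ((y ∘ Sum.inl) 0 * (uB ∘ Sum.inl) 0) = a * y (Sum.inl 0)
    rw [z4]
    show a * ((y (Sum.inl 0)) * 1) = a * y (Sum.inl 0)
    ring
  have key : a * y (Sum.inl 0) = 0 := by
    rw [e1, e2, hq, hua, hub, hbilA, hbilB] at hpol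
    have h2' : 2 * (a * y (Sum.inl 0)) = 0 := by linear_combination hpol
    rcases mul_eq_zero.1 h2' with h | h
    · exact absurd h h2
    · exact h
  have hy0 : y (Sum.inl 0) = 0 := by
    rcases mul_eq_zero.1 key with h | h
    · exact absurd h ha
    · exact h
  funext j
  rcases j with t | t
  · have ht : t = 0 := Subsingleton.elim _ _
    rw [ht]
    exact hy0
  · rfl

lemma cancel_single {ι κ : Type} [Fintype ι] [Fintype κ] (h2 : (2:k) ≠ 0) {a : k}
    (ha : a ≠ 0) {d : ι → k} {e : κ → k}
    (h : FormIsom k (Sum.elim (fun _ : Fin 1 => a) d) (Sum.elim (fun _ : Fin 1 => a) e)) :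
    FormIsom k d e := by
  obtain ⟨f⟩ := h
  have hv : diagQF k (Sum.elim (fun _ : Fin 1 => a) e)
      (f.toLinearEquiv (Sum.elim (fun _ => 1) 0)) = a :=
    (f.map_app _).trans (diag_unit_value a d)
  obtain ⟨g, hgq, hgv⟩ := sendTo h2 (Sum.elim (fun _ : Fin 1 => a) e)
    (Sum.elim (fun _ => 1) 0) (f.toLinearEquiv (Sum.elim (fun _ => 1) 0)) ha
    (diag_unit_value a e) hv
  set L := f.toLinearEquiv.trans g with hLdef
  have hL : ∀ x, diagQF k (Sum.elim (fun _ : Fin 1 => a) e) (L x)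
      = diagQF k (Sum.elim (fun _ : Fin 1 => a) d) x := by
    intro x
    rw [hLdef, LinearEquiv.trans_apply, hgq]
    exact f.map_app x
  have hLu : L (Sum.elim (fun _ => 1) 0) = Sum.elim (fun _ => 1) 0 := by
    rw [hLdef, LinearEquiv.trans_apply, hgv]
  have hL' : ∀ y, diagQF k (Sum.elim (fun _ : Fin 1 => a) d) (L.symm y)
      = diagQF k (Sum.elim (fun _ : Fin 1 => a) e) y := fun y => by
    rw [← hL (L.symm y), L.apply_symm_apply]
  have hLu' : L.symm (Sum.elim (fun _ => 1) 0) = Sum.elim (fun _ => 1) 0 := by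
    rw [← hLu, L.symm_apply_apply]
  have hsplit : ∀ x : ι → k, L (Sum.elim (0 : Fin 1 → k) x) = Sum.elim (0 : Fin 1 → k) ((L (Sum.elim (0 : Fin 1 → k) x)) ∘ Sum.inr) :=
    inr_supported ha h2 L hL hLu
  have hsplit' : ∀ y : κ → k,
      L.symm (Sum.elim (0 : Fin 1 → k) y) = Sum.elim (0 : Fin 1 → k) ((L.symm (Sum.elim (0 : Fin 1 → k) y)) ∘ Sum.inr) :=
    inr_supported ha h2 L.symm hL' hLu'
  have elim_add : ∀ (x y : ι → k), Sum.elim (0 : Fin 1 → k) (x + y)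
      = Sum.elim (0 : Fin 1 → k) x + Sum.elim (0 : Fin 1 → k) y := by
    intro x y; funext j; rcases j with t | t <;> simp
  have elim_smul : ∀ (t : k) (x : ι → k), Sum.elim (0 : Fin 1 → k) (t • x)
      = t • Sum.elim (0 : Fin 1 → k) x := by
    intro t x; funext j; rcases j with s | s <;> simp
  refine mkIsom _ _ ?_ ?_
  · exact
    { toFun := fun x => (L (Sum.elim (0 : Fin 1 → k) x)) ∘ Sum.inr
      invFun := fun y => (L.symm (Sum.elim (0 : Fin 1 → k) y)) ∘ Sum.inr
      map_add' := by
        intro x y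
        show (L (Sum.elim (0 : Fin 1 → k) (x + y))) ∘ Sum.inr
          = (L (Sum.elim (0 : Fin 1 → k) x)) ∘ Sum.inr
            + (L (Sum.elim (0 : Fin 1 → k) y)) ∘ Sum.inr
        rw [elim_add, map_add L]
        rfl
      map_smul' := by
        intro t x
        show (L (Sum.elim (0 : Fin 1 → k) (t • x))) ∘ Sum.inr
          = t • ((L (Sum.elim (0 : Fin 1 → k) x)) ∘ Sum.inr)
        rw [elim_smul, map_smul L]
        rfl
      left_inv := by
        intro x
        have h1 : Sum.elim (0 : Fin 1 → k) ((L (Sum.elim (0 : Fin 1 → k) x)) ∘ Sum.inr)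
            = L (Sum.elim (0 : Fin 1 → k) x) := (hsplit x).symm
        show (L.symm (Sum.elim (0 : Fin 1 → k) ((L (Sum.elim (0 : Fin 1 → k) x)) ∘ Sum.inr))) ∘ Sum.inr = x
        rw [h1, L.symm_apply_apply]
        rfl
      right_inv := by
        intro y
        have h1 : Sum.elim (0 : Fin 1 → k) ((L.symm (Sum.elim (0 : Fin 1 → k) y)) ∘ Sum.inr)
            = L.symm (Sum.elim (0 : Fin 1 → k) y) := (hsplit' y).symm
        show (L (Sum.elim (0 : Fin 1 → k) ((L.symm (Sum.elim (0 : Fin 1 → k) y)) ∘ Sum.inr))) ∘ Sum.inr = y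
        rw [h1, L.apply_symm_apply]
        rfl }
  · intro x
    show diagQF k e ((L (Sum.elim (0 : Fin 1 → k) x)) ∘ Sum.inr) = diagQF k d x
    have h1 : diagQF k (Sum.elim (fun _ : Fin 1 => a) e)
        (Sum.elim (0 : Fin 1 → k) ((L (Sum.elim (0 : Fin 1 → k) x)) ∘ Sum.inr))
        = diagQF k (Sum.elim (fun _ : Fin 1 => a) d) (Sum.elim (0 : Fin 1 → k) x) := by
      rw [← hsplit x]
      exact hL _
    rw [diagQF_elim_apply, diagQF_elim_apply] at h1
    have z1 : ((Sum.elim (0 : Fin 1 → k) ((L (Sum.elim (0 : Fin 1 → k) x)) ∘ Sum.inr)) ∘ Sum.inl)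
        = (0 : Fin 1 → k) := rfl
    have z2 : ((Sum.elim (0 : Fin 1 → k) ((L (Sum.elim (0 : Fin 1 → k) x)) ∘ Sum.inr)) ∘ Sum.inr)
        = (L (Sum.elim (0 : Fin 1 → k) x)) ∘ Sum.inr := rfl
    have z3 : ((Sum.elim (0 : Fin 1 → k) x) ∘ Sum.inl) = (0 : Fin 1 → k) := rfl
    have z4 : ((Sum.elim (0 : Fin 1 → k) x) ∘ Sum.inr) = x := rfl
    rw [z1, z2, z3, z4] at h1
    simpa using h1

lemma hyp1_conv {γ : Type} [Fintype γ] (g : γ → k) :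
    FormIsom k (Sum.elim (hypForm k 1) g)
      (Sum.elim (fun _ : Fin 1 => (1:k)) (Sum.elim (fun _ : Fin 1 => (-1:k)) g)) :=
  (isom_sumCongr hyp_one (FormIsom.refl g)).trans (isom_assoc _ _ _)

lemma cancel_hyp1 {ι κ : Type} [Fintype ι] [Fintype κ] (h2 : (2:k) ≠ 0)
    {d : ι → k} {e : κ → k}
    (h : FormIsom k (Sum.elim (hypForm k 1) d) (Sum.elim (hypForm k 1) e)) :
    FormIsom k d e := by
  have h' := ((hyp1_conv d).symm.trans h).trans (hyp1_conv e)
  have h1 := cancel_single h2 (one_ne_zero) h'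
  exact cancel_single h2 (neg_ne_zero.2 one_ne_zero) h1

lemma hypsucc_conv {γ : Type} [Fintype γ] (m : ℕ) (g : γ → k) :
    FormIsom k (Sum.elim (hypForm k (m + 1)) g)
      (Sum.elim (hypForm k 1) (Sum.elim (hypForm k m) g)) :=
  (isom_sumCongr ((hyp_congr (by omega : m + 1 = 1 + m)).trans (hyp_add 1 m))
    (FormIsom.refl g)).trans (isom_assoc _ _ _)

lemma cancel_hyp {ι κ : Type} [Fintype ι] [Fintype κ] (h2 : (2:k) ≠ 0) (m : ℕ)
    {d : ι → k} {e : κ → k}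
    (h : FormIsom k (Sum.elim (hypForm k m) d) (Sum.elim (hypForm k m) e)) :
    FormIsom k d e := by
  induction m generalizing ι κ d e with
  | zero =>
    haveI : IsEmpty (Fin (2 * 0)) := ⟨fun t => absurd t.isLt (by omega)⟩
    exact ((isom_empty_left _ d).symm.trans h).trans (isom_empty_left _ e)
  | succ m ih =>
    have h' := ((hypsucc_conv m d).symm.trans h).trans (hypsucc_conv m e)
    exact ih (cancel_hyp1 h2 h')


/-! ### Binary forms and representation -/

lemma diagQF_pair_apply (c₁ c₂ : k) (y : Fin 1 ⊕ Fin 1 → k) :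
    diagQF k (Sum.elim (fun _ : Fin 1 => c₁) (fun _ : Fin 1 => c₂)) y
      = c₁ * (y (Sum.inl 0) * y (Sum.inl 0)) + c₂ * (y (Sum.inr 0) * y (Sum.inr 0)) := by
  rw [diagQF_elim_apply, diagQF_single_apply, diagQF_single_apply]
  rfl

noncomputable def binEquiv (d₁ d₂ x₁ x₂ a : k) (ha : a ≠ 0)
    (heq : d₁ * (x₁ * x₁) + d₂ * (x₂ * x₂) = a) :
    (Fin 1 ⊕ Fin 1 → k) ≃ₗ[k] (Fin 1 ⊕ Fin 1 → k) where
  toFun := fun y => Sum.elim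
    (fun _ => (d₁ * x₁ * y (Sum.inl 0) + d₂ * x₂ * y (Sum.inr 0)) / a)
    (fun _ => (x₂ * y (Sum.inl 0) - x₁ * y (Sum.inr 0)) / a)
  invFun := fun z => Sum.elim
    (fun _ => x₁ * z (Sum.inl 0) + d₂ * x₂ * z (Sum.inr 0))
    (fun _ => x₂ * z (Sum.inl 0) - d₁ * x₁ * z (Sum.inr 0))
  map_add' := by
    intro u v
    funext j
    rcases j with t | t <;>
      · simp only [Sum.elim_inl, Sum.elim_inr, Pi.add_apply]
        rw [← add_div]
        ring_nf
  map_smul' := by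
    intro t u
    funext j
    rcases j with s | s <;>
      · simp only [Sum.elim_inl, Sum.elim_inr, Pi.smul_apply, smul_eq_mul,
          RingHom.id_apply]
        field_simp
  left_inv := by
    intro y
    funext j
    rcases j with t | t
    · show x₁ * ((d₁ * x₁ * y (Sum.inl 0) + d₂ * x₂ * y (Sum.inr 0)) / a)
        + d₂ * x₂ * ((x₂ * y (Sum.inl 0) - x₁ * y (Sum.inr 0)) / a) = y (Sum.inl t)
      have ht : t = 0 := Subsingleton.elim _ _
      rw [ht]
      field_simp
      linear_combination (y (Sum.inl 0)) * heq
    · show x₂ * ((d₁ * x₁ * y (Sum.inl 0) + d₂ * x₂ * y (Sum.inr 0)) / a)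
        - d₁ * x₁ * ((x₂ * y (Sum.inl 0) - x₁ * y (Sum.inr 0)) / a) = y (Sum.inr t)
      have ht : t = 0 := Subsingleton.elim _ _
      rw [ht]
      field_simp
      linear_combination (y (Sum.inr 0)) * heq
  right_inv := by
    intro z
    funext j
    rcases j with t | t
    · show (d₁ * x₁ * (x₁ * z (Sum.inl 0) + d₂ * x₂ * z (Sum.inr 0))
        + d₂ * x₂ * (x₂ * z (Sum.inl 0) - d₁ * x₁ * z (Sum.inr 0))) / a = z (Sum.inl t)
      have ht : t = 0 := Subsingleton.elim _ _
      rw [ht]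
      field_simp
      linear_combination (z (Sum.inl 0)) * heq
    · show (x₂ * (x₁ * z (Sum.inl 0) + d₂ * x₂ * z (Sum.inr 0))
        - x₁ * (x₂ * z (Sum.inl 0) - d₁ * x₁ * z (Sum.inr 0))) / a = z (Sum.inr t)
      have ht : t = 0 := Subsingleton.elim _ _
      rw [ht]
      field_simp
      linear_combination (z (Sum.inr 0)) * heq

lemma binary_isom {d₁ d₂ x₁ x₂ a : k} (hd₁ : d₁ ≠ 0) (hd₂ : d₂ ≠ 0) (ha : a ≠ 0)
    (heq : d₁ * (x₁ * x₁) + d₂ * (x₂ * x₂) = a) :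
    FormIsom k (Sum.elim (fun _ : Fin 1 => d₁) (fun _ : Fin 1 => d₂))
      (Sum.elim (fun _ : Fin 1 => a) (fun _ : Fin 1 => d₁ * d₂ * a)) := by
  refine mkIsom _ _ (binEquiv d₁ d₂ x₁ x₂ a ha heq) ?_
  intro y
  have h1 : (binEquiv d₁ d₂ x₁ x₂ a ha heq) y = Sum.elim
      (fun _ : Fin 1 => (d₁ * x₁ * y (Sum.inl 0) + d₂ * x₂ * y (Sum.inr 0)) / a)
      (fun _ : Fin 1 => (x₂ * y (Sum.inl 0) - x₁ * y (Sum.inr 0)) / a) := rfl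
  rw [h1, diagQF_pair_apply, diagQF_pair_apply]
  simp only [Sum.elim_inl, Sum.elim_inr]
  field_simp
  ring_nf
  linear_combination ((d₁ * (y (Sum.inl 0) * y (Sum.inl 0))
    + d₂ * (y (Sum.inr 0) * y (Sum.inr 0)))) * heq


lemma isom_toFin_nonzero {κ : Type} [Fintype κ] (E : κ → k) (hE : ∀ t, E t ≠ 0)
    (s : ℕ) (h : Fintype.card κ = s) :
    ∃ e : Fin s → k, (∀ t, e t ≠ 0) ∧ FormIsom k E e := by
  obtain ⟨e, h1, h2⟩ := isom_toFin E s h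
  refine ⟨e, fun t => ?_, h1⟩
  obtain ⟨i, hi⟩ := h2 t
  rw [hi]; exact hE i

/-- the representation lemma: a diagonal form with nonzero coefficients representing a
nonzero value `a` is isometric to `⟨a⟩ ⟂ (rest)`. -/
lemma rep_lemma : ∀ (n : ℕ) (d : Fin n → k), (∀ t, d t ≠ 0) → ∀ {a : k}, a ≠ 0 →
    (∃ x, diagQF k d x = a) →
    ∃ (s : ℕ) (e : Fin s → k), (∀ t, e t ≠ 0) ∧
      FormIsom k d (Sum.elim (fun _ : Fin 1 => a) e) := by
  intro n
  induction n with
  | zero =>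
    intro d hd a ha ⟨x, hx⟩
    rw [diagQF_apply] at hx
    simp at hx
    exact absurd hx.symm ha
  | succ n ih =>
    intro d hd a ha ⟨x, hx⟩
    set d' : Fin n → k := d ∘ Fin.castSucc with hd'def
    set x' : Fin n → k := x ∘ Fin.castSucc with hx'def
    have hd' : ∀ t, d' t ≠ 0 := fun t => hd _
    have hsum : diagQF k d x = diagQF k d' x' + d (Fin.last n) * (x (Fin.last n) * x (Fin.last n)) := by
      rw [diagQF_apply, diagQF_apply, Fin.sum_univ_castSucc]
      rfl
    have hsplitIso : FormIsom k (Sum.elim d' (fun _ : Fin 1 => d (Fin.last n))) d := by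
      refine isom_reindex (gsplit n) _ _ (fun i => ?_)
      rcases i with t | t
      · rfl
      · rfl
    by_cases hb : diagQF k d' x' = 0
    · -- the last coordinate represents a
      have hlast : d (Fin.last n) * (x (Fin.last n) * x (Fin.last n)) = a := by
        rw [hx] at hsum; rw [hb, zero_add] at hsum; exact hsum.symm
      have hxl : x (Fin.last n) ≠ 0 := by
        intro h0
        rw [h0] at hlast
        simp at hlast
        exact absurd hlast.symm ha
      refine ⟨n, d', hd', ?_⟩
      refine FormIsom.trans (FormIsom.trans hsplitIso.symm (isom_comm _ _)) ?_
      exact isom_sumCongr (isom_single hxl hlast.symm) (FormIsom.refl d')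
    · obtain ⟨s', e', he', iso'⟩ := ih d' hd' hb ⟨x', rfl⟩
      by_cases hc : d (Fin.last n) * (x (Fin.last n) * x (Fin.last n)) = 0
      · -- a = b, tack the last coordinate onto the rest
        have hab : diagQF k d' x' = a := by rw [hx, hc, add_zero] at hsum; exact hsum.symm
        obtain ⟨e, he, isoe⟩ := isom_toFin_nonzero
          (Sum.elim e' (fun _ : Fin 1 => d (Fin.last n)))
          (fun t => by
            rcases t with t | t
            · exact he' t
            · exact hd _)
          (s' + 1) (by simp)
        refine ⟨s' + 1, e, he, ?_⟩
        have step : FormIsom k d (Sum.elim (fun _ : Fin 1 => a)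
            (Sum.elim e' (fun _ : Fin 1 => d (Fin.last n)))) := by
          rw [← hab]
          refine FormIsom.trans hsplitIso.symm ?_
          refine FormIsom.trans (isom_sumCongr iso' (FormIsom.refl _)) ?_
          exact isom_assoc _ _ _
        exact step.trans (isom_sumCongr (FormIsom.refl _) isoe)
      · -- binary step
        have heq : diagQF k d' x' * (1 * 1)
            + d (Fin.last n) * (x (Fin.last n) * x (Fin.last n)) = a := by
          rw [hx] at hsum
          linear_combination -hsum
        have hbin := binary_isom hb (hd (Fin.last n)) ha heq
        obtain ⟨e, he, isoe⟩ := isom_toFin_nonzero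
          (Sum.elim (fun _ : Fin 1 => diagQF k d' x' * d (Fin.last n) * a) e')
          (fun t => by
            rcases t with t | t
            · exact mul_ne_zero (mul_ne_zero hb (hd _)) ha
            · exact he' t)
          (1 + s') (by simp)
        refine ⟨1 + s', e, he, ?_⟩
        refine FormIsom.trans hsplitIso.symm ?_
        refine FormIsom.trans (isom_sumCongr iso' (FormIsom.refl _)) ?_
        -- (⟨b⟩ ⊕ e') ⊕ ⟨dl⟩ ≅ (⟨b⟩ ⊕ ⟨dl⟩) ⊕ e'
        refine FormIsom.trans (isom_assoc _ _ _) ?_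
        refine FormIsom.trans (isom_sumCongr (FormIsom.refl _) (isom_comm _ _)) ?_
        refine FormIsom.trans (isom_assoc _ _ _).symm ?_
        refine FormIsom.trans (isom_sumCongr hbin (FormIsom.refl e')) ?_
        refine FormIsom.trans (isom_assoc _ _ _) ?_
        exact isom_sumCongr (FormIsom.refl _) isoe

/-- an isotropic diagonal form with nonzero coefficients splits off a hyperbolic plane -/
lemma split_hyp {ι : Type} [Fintype ι] (h2 : (2:k) ≠ 0) (d : ι → k) (hd : ∀ t, d t ≠ 0)
    (hiso : ¬ (diagQF k d).Anisotropic) :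
    ∃ (s : ℕ) (e : Fin s → k), (∀ t, e t ≠ 0) ∧
      FormIsom k d (Sum.elim (hypForm k 1) e) := by
  classical
  simp only [QuadraticMap.Anisotropic, not_forall] at hiso
  obtain ⟨x, hQ, hx⟩ := hiso
  have hxne : ∃ i₀, x i₀ ≠ 0 := by
    by_contra hc
    push_neg at hc
    exact hx (funext hc)
  obtain ⟨i₀, hxi⟩ := hxne
  -- peel off coordinate i₀
  set D : {i // i ≠ i₀} → k := fun j => d j.val with hD
  have hpeel : FormIsom k (Sum.elim (fun _ : Fin 1 => d i₀) D) d := by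
    refine isom_reindex
      { toFun := Sum.elim (fun _ : Fin 1 => i₀) (fun j => j.val)
        invFun := fun i => if h : i = i₀ then Sum.inl 0 else Sum.inr ⟨i, h⟩
        left_inv := by
          rintro (t | j)
          · simp only [Sum.elim_inl, dif_pos]
            exact (dif_pos rfl).trans (congrArg Sum.inl (Subsingleton.elim _ _))
          · simp only [Sum.elim_inr, j.prop, dif_neg, not_false_iff]
            exact dif_neg j.prop
        right_inv := by
          intro i
          by_cases h : i = i₀ <;> simp [h] }
      _ _ (fun i => ?_)
    rcases i with t | j
    · rfl
    · rfl
  set c : k := diagQF k D (fun j => x j.val) with hc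
  have hsum : diagQF k d x = d i₀ * (x i₀ * x i₀) + c := by
    rw [diagQF_apply, hc, diagQF_apply]
    rw [Fintype.sum_eq_add_sum_compl i₀ (fun i => d i * (x i * x i))]
    congr 1
    exact Finset.sum_subtype (p := fun i => i ≠ i₀) ({i₀}ᶜ : Finset ι)
      (fun z => by simp) (fun i => d i * (x i * x i))
  have hcval : d i₀ * (x i₀ * x i₀) + c = 0 := by rw [← hsum]; exact hQ
  have hcne : c ≠ 0 := by
    intro h0
    rw [h0, add_zero] at hcval
    rcases mul_eq_zero.1 hcval with h | h
    · exact hd i₀ h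
    · rcases mul_eq_zero.1 h with h | h <;> exact hxi h
  -- D represents c
  obtain ⟨Df, hDf1, hDf2⟩ := isom_toFin D (Fintype.card {i // i ≠ i₀}) rfl
  have hDfnz : ∀ t, Df t ≠ 0 := fun t => by
    obtain ⟨i, hi⟩ := hDf2 t; rw [hi]; exact hd _
  have hrepc : ∃ y, diagQF k Df y = c := rep_of_isom hDf1 ⟨_, rfl⟩
  obtain ⟨s', e', he', isoDf⟩ := rep_lemma _ Df hDfnz hcne hrepc
  -- assemble
  refine ⟨s', e', he', ?_⟩
  have hsc1 : FormIsom k (fun _ : Fin 1 => d i₀) (fun _ : Fin 1 => -c) := by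
    refine isom_single hxi ?_
    have : -c = d i₀ * (x i₀ * x i₀) := by linear_combination -hcval
    exact this
  have hpair : FormIsom k (Sum.elim (fun _ : Fin 1 => -c) (fun _ : Fin 1 => c))
      (hypForm k 1) := by
    have h1 : (-c) * (((c⁻¹ - 1)/2) * ((c⁻¹ - 1)/2))
        + c * (((c⁻¹ + 1)/2) * ((c⁻¹ + 1)/2)) = 1 := by
      have hcu : c * c⁻¹ = 1 := mul_inv_cancel₀ hcne
      field_simp
      ring_nf
    have hb := binary_isom (neg_ne_zero.2 hcne) hcne one_ne_zero h1
    refine hb.trans ?_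
    refine FormIsom.trans (isom_sumCongr (FormIsom.refl _)
      (isom_single (inv_ne_zero hcne) (?_ : (-1 : k) = (-c) * c * 1 * (c⁻¹ * c⁻¹)))) ?_
    · field_simp
    · exact hyp_one.symm
  refine FormIsom.trans hpeel.symm ?_
  refine FormIsom.trans (isom_sumCongr hsc1 (hDf1.trans isoDf)) ?_
  refine FormIsom.trans (isom_assoc _ _ _).symm ?_
  exact isom_sumCongr hpair (FormIsom.refl e')


/-! ### Witt index -/

lemma witt_bddAbove {ι : Type} [Fintype ι] (d : ι → k) :
    BddAbove {m : ℕ | ∃ (s : ℕ) (e : Fin s → k), FormIsom k d (Sum.elim (hypForm k m) e)} := by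
  refine ⟨Fintype.card ι, fun m hm => ?_⟩
  obtain ⟨s, e, h⟩ := hm
  have hc := isom_card h
  simp [Fintype.card_sum] at hc
  omega

lemma le_wittIndex {ι κ : Type} [Fintype ι] [Fintype κ] {d : ι → k} {m : ℕ} {e : κ → k}
    (h : FormIsom k d (Sum.elim (hypForm k m) e)) : m ≤ wittIndex k d := by
  obtain ⟨ef, hef, _⟩ := isom_toFin e (Fintype.card κ) rfl
  exact le_csSup (witt_bddAbove d) ⟨Fintype.card κ, ef,
    h.trans (isom_sumCongr (FormIsom.refl _) hef)⟩

lemma wittIndex_eq {ι κ : Type} [Fintype ι] [Fintype κ] (h2 : (2:k) ≠ 0) {d : ι → k}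
    {w : ℕ} {u : κ → k} (h : FormIsom k d (Sum.elim (hypForm k w) u))
    (hu : (diagQF k u).Anisotropic) : wittIndex k d = w := by
  refine le_antisymm ?_ (le_wittIndex h)
  obtain ⟨uf, huf, _⟩ := isom_toFin u (Fintype.card κ) rfl
  refine csSup_le ⟨w, Fintype.card κ, uf,
    h.trans (isom_sumCongr (FormIsom.refl _) huf)⟩ ?_
  rintro m ⟨s', e', h'⟩
  by_contra hlt
  push_neg at hlt
  have hm : m = w + (m - w) := by omega
  have conv : FormIsom k (Sum.elim (hypForm k m) e')
      (Sum.elim (hypForm k w) (Sum.elim (hypForm k (m - w)) e')) :=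
    (isom_sumCongr ((hyp_congr hm).trans (hyp_add w (m - w)))
      (FormIsom.refl e')).trans (isom_assoc _ _ _)
  have hcomb := (h.symm.trans h').trans conv
  have hcancel := cancel_hyp h2 w hcomb
  exact hyp_isotropic (m - w) (by omega) e' (anis_of_isom hcancel.symm hu)

lemma witt_decomp_anis {ι : Type} [Fintype ι] (d : ι → k)
    (h : (diagQF k d).Anisotropic) :
    ∃ (w s : ℕ) (u : Fin s → k), (diagQF k u).Anisotropic ∧
      FormIsom k d (Sum.elim (hypForm k w) u) := by
  obtain ⟨u, hu1, _⟩ := isom_toFin d (Fintype.card ι) rfl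
  haveI : IsEmpty (Fin (2 * 0)) := ⟨fun t => absurd t.isLt (by omega)⟩
  exact ⟨0, _, u, anis_of_isom hu1.symm h, hu1.trans (isom_empty_left _ u).symm⟩

lemma witt_decomp_aux (h2 : (2:k) ≠ 0) :
    ∀ (N : ℕ) (ι : Type) (_ : Fintype ι) (d : ι → k), (∀ t, d t ≠ 0) →
    Fintype.card ι ≤ N →
    ∃ (w s : ℕ) (u : Fin s → k), (diagQF k u).Anisotropic ∧
      FormIsom k d (Sum.elim (hypForm k w) u) := by
  intro N
  induction N with
  | zero =>
    intro ι _ d hd hcard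
    refine witt_decomp_anis d ?_
    intro x hx
    haveI : IsEmpty ι := Fintype.card_eq_zero_iff.1 (by omega)
    funext t
    exact (IsEmpty.false t).elim
  | succ N ih =>
    intro ι _ d hd hcard
    by_cases ha : (diagQF k d).Anisotropic
    · exact witt_decomp_anis d ha
    · obtain ⟨s, e, he, hiso⟩ := split_hyp h2 d hd ha
      have hcard2 : Fintype.card ι = 2 + s := by
        have := isom_card hiso
        simpa [Fintype.card_sum] using this
      obtain ⟨w', s', u, hu, hiso'⟩ := ih (Fin s) _ e he (by simp; omega)
      refine ⟨1 + w', s', u, hu, ?_⟩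
      refine FormIsom.trans hiso ?_
      refine FormIsom.trans (isom_sumCongr (FormIsom.refl _) hiso') ?_
      refine FormIsom.trans (isom_assoc _ _ _).symm ?_
      exact isom_sumCongr (hyp_add 1 w').symm (FormIsom.refl u)

lemma witt_decomp {ι : Type} [Fintype ι] (h2 : (2:k) ≠ 0) (d : ι → k)
    (hd : ∀ t, d t ≠ 0) :
    ∃ (w s : ℕ) (u : Fin s → k), (diagQF k u).Anisotropic ∧
      FormIsom k d (Sum.elim (hypForm k w) u) :=
  witt_decomp_aux h2 (Fintype.card ι) ι _ d hd le_rfl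


/-! ### The invariants P and T -/

def Tprop (k : Type) [Field k] (i : ℕ) : Prop :=
  ∃ (s : ℕ) (φ : Fin s → k), (diagQF k φ).Anisotropic ∧
    ∀ σ : Fin i → k, (∀ t, σ t ≠ 0) → ¬ (diagQF k (Sum.elim φ σ)).Anisotropic

def Pprop (k : Type) [Field k] (i j : ℕ) : Prop :=
  ∃ n : ℕ, 1 ≤ n ∧ ∃ d : Fin n → k, (∀ t, d t ≠ 0) ∧
    wittIndex k d < j ∧ ∀ σ : Fin i → k, (∀ t, σ t ≠ 0) → j ≤ wittIndex k (Sum.elim d σ)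

lemma mInv_eq_top_iff (i j : ℕ) : mInv k i j = ⊤ ↔ ¬ Pprop k i j := by
  constructor
  · intro h hP
    obtain ⟨n, hn, d, hd, hw, hs⟩ := hP
    have hmem : (n : ℕ∞) ∈ {N : ℕ∞ | ∃ n : ℕ, N = n ∧ 1 ≤ n ∧
        ∃ d : Fin n → k, (∀ t, d t ≠ 0) ∧ wittIndex k d < j ∧
          ∀ σ : Fin i → k, (∀ t, σ t ≠ 0) → j ≤ wittIndex k (Sum.elim d σ)} :=
      ⟨n, rfl, hn, d, hd, hw, hs⟩
    have hle := sInf_le hmem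
    rw [mInv] at h
    rw [h] at hle
    exact (ENat.coe_ne_top n) (top_le_iff.1 hle)
  · intro h
    rw [mInv]
    have hempty : {N : ℕ∞ | ∃ n : ℕ, N = n ∧ 1 ≤ n ∧
        ∃ d : Fin n → k, (∀ t, d t ≠ 0) ∧ wittIndex k d < j ∧
          ∀ σ : Fin i → k, (∀ t, σ t ≠ 0) → j ≤ wittIndex k (Sum.elim d σ)} = ∅ := by
      rw [Set.eq_empty_iff_forall_notMem]
      rintro N ⟨n, rfl, hn, d, hd, hw, hs⟩
      exact h ⟨n, hn, d, hd, hw, hs⟩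
    rw [hempty, sInf_empty]

lemma not_anis_extend_left {α β : Type} [Fintype α] [Fintype β] (f : α → k) (g : β → k)
    (h : ¬ (diagQF k g).Anisotropic) : ¬ (diagQF k (Sum.elim f g)).Anisotropic := by
  simp only [QuadraticMap.Anisotropic, not_forall] at h ⊢
  obtain ⟨x, hQ, hx⟩ := h
  refine ⟨Sum.elim 0 x, ?_, ?_⟩
  · rw [diagQF_elim_apply]
    have h1 : (Sum.elim (0 : α → k) x ∘ Sum.inl) = 0 := rfl
    have h2 : (Sum.elim (0 : α → k) x ∘ Sum.inr) = x := rfl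
    rw [h1, h2, map_zero, zero_add]
    exact hQ
  · intro h0
    apply hx
    funext t
    exact congrFun h0 (Sum.inr t)

lemma not_anis_of_empty_left {α β : Type} [Fintype α] [IsEmpty α] [Fintype β]
    (f : α → k) (g : β → k)
    (h : ¬ (diagQF k (Sum.elim f g)).Anisotropic) : ¬ (diagQF k g).Anisotropic := by
  simp only [QuadraticMap.Anisotropic, not_forall] at h ⊢
  obtain ⟨x, hQ, hx⟩ := h
  refine ⟨x ∘ Sum.inr, ?_, ?_⟩
  · rw [diagQF_elim_apply] at hQ
    have h1 : diagQF k f (x ∘ Sum.inl) = 0 := by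
      have : (x ∘ Sum.inl) = 0 := funext fun t => (IsEmpty.false t).elim
      rw [this, map_zero]
    rw [h1, zero_add] at hQ
    exact hQ
  · intro h0
    apply hx
    funext t
    rcases t with t | t
    · exact (IsEmpty.false t).elim
    · exact congrFun h0 t

lemma iso_extend_coord {s i : ℕ} (φ : Fin s → k) (σ : Fin i → k) (p : Fin i)
    (h : ¬ (diagQF k (Sum.elim φ (fun _ : Fin 1 => σ p))).Anisotropic) :
    ¬ (diagQF k (Sum.elim φ σ)).Anisotropic := by
  simp only [QuadraticMap.Anisotropic, not_forall] at h ⊢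
  obtain ⟨x, hQ, hx⟩ := h
  classical
  set y : Fin s ⊕ Fin i → k :=
    Sum.elim (x ∘ Sum.inl) (fun t => if t = p then x (Sum.inr 0) else 0) with hy
  refine ⟨y, ?_, ?_⟩
  · rw [diagQF_elim_apply]
    have h1 : (y ∘ Sum.inl) = x ∘ Sum.inl := rfl
    have h2 : diagQF k σ (y ∘ Sum.inr) = σ p * (x (Sum.inr 0) * x (Sum.inr 0)) := by
      rw [diagQF_apply]
      rw [Finset.sum_eq_single p]
      · simp [hy]
      · intro b _ hb
        have : (y ∘ Sum.inr) b = 0 := by simp [hy, hb]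
        rw [this]; ring
      · intro hb; simp at hb
    rw [h1, h2]
    rw [diagQF_elim_apply] at hQ
    have h3 : diagQF k (fun _ : Fin 1 => σ p) (x ∘ Sum.inr)
        = σ p * (x (Sum.inr 0) * x (Sum.inr 0)) := by
      rw [diagQF_single_apply]; rfl
    rw [h3] at hQ
    exact hQ
  · intro h0
    apply hx
    funext t
    rcases t with t | t
    · exact congrFun h0 (Sum.inl t)
    · have ht : t = 0 := Subsingleton.elim _ _
      rw [ht]
      have := congrFun h0 (Sum.inr p)
      simpa [hy] using this

lemma T_one_to (i : ℕ) (hi : 1 ≤ i) (hT : Tprop k 1) : Tprop k i := by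
  obtain ⟨s, φ, hφ, hσ⟩ := hT
  refine ⟨s, φ, hφ, fun σ hnz => ?_⟩
  have h1 := hσ (fun _ : Fin 1 => σ ⟨0, by omega⟩) (fun t => hnz _)
  exact iso_extend_coord φ σ ⟨0, by omega⟩ h1

lemma T_down (i : ℕ) (hi : 1 ≤ i) (hT : Tprop k (i + 1)) : Tprop k i := by
  obtain ⟨s, φ, hφ, hσ⟩ := hT
  by_cases hall : ∀ a : k, a ≠ 0 → ¬ (diagQF k (Sum.elim φ (fun _ : Fin 1 => a))).Anisotropic
  · refine T_one_to i hi ⟨s, φ, hφ, fun σ hnz => ?_⟩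
    have h1 := hall (σ 0) (hnz 0)
    have hfe : (fun _ : Fin 1 => σ 0) = σ := funext fun t => by rw [Subsingleton.elim t 0]
    rwa [hfe] at h1
  · push_neg at hall
    obtain ⟨a, ha, hAnis⟩ := hall
    obtain ⟨φf, isoφ, _⟩ := isom_toFin (Sum.elim φ (fun _ : Fin 1 => a)) (s + 1) (by simp)
    refine ⟨s + 1, φf, anis_of_isom isoφ.symm hAnis, fun σ hnz => ?_⟩
    set σ'' : Fin (i + 1) → k := fun t => if h : t.val < i then σ ⟨t.val, h⟩ else a
      with hσ''
    have hnz'' : ∀ t, σ'' t ≠ 0 := by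
      intro t
      rw [hσ'']
      by_cases h : t.val < i
      · simp only [h, dif_pos]; exact hnz _
      · simp only [h, dif_neg, not_false_iff]; exact ha
    have hbig := hσ σ'' hnz''
    have g : FormIsom k (Sum.elim (fun _ : Fin 1 => a) σ) σ'' := by
      refine isom_reindex ((Equiv.sumComm (Fin 1) (Fin i)).trans (gsplit i)) _ _
        (fun t => ?_)
      rcases t with t | t
      · show a = σ'' (Fin.last i)
        rw [hσ'']
        have : ¬ ((Fin.last i).val < i) := by simp [Fin.last]
        simp [this]
      · show σ t = σ'' (Fin.castSucc t)
        rw [hσ'']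
        have ht : (Fin.castSucc t).val < i := t.isLt
        simp [ht]
    have hiso : FormIsom k (Sum.elim φf σ) (Sum.elim φ σ'') := by
      refine FormIsom.trans (isom_sumCongr isoφ.symm (FormIsom.refl σ)) ?_
      refine FormIsom.trans (isom_assoc _ _ _) ?_
      exact isom_sumCongr (FormIsom.refl φ) g
    intro hA
    exact hbig (anis_of_isom hiso.symm hA)

lemma T_to_one : ∀ i : ℕ, 1 ≤ i → Tprop k i → Tprop k 1 := by
  intro i
  induction i with
  | zero => intro h; omega
  | succ m ih =>
    intro _ hT
    by_cases hm : m = 0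
    · subst hm; exact hT
    · exact ih (by omega) (T_down m (by omega) hT)

lemma P_of_T (h2 : (2:k) ≠ 0) (i j : ℕ) (hi : 1 ≤ i) (hj : 1 ≤ j) (hT : Tprop k i) :
    Pprop k i j := by
  -- upgrade to a nonempty anisotropic witness
  have hT' : ∃ (s : ℕ) (φ : Fin s → k), 1 ≤ s ∧ (diagQF k φ).Anisotropic ∧
      ∀ σ : Fin i → k, (∀ t, σ t ≠ 0) → ¬ (diagQF k (Sum.elim φ σ)).Anisotropic := by
    obtain ⟨s, φ, hφ, hσ⟩ := hT
    by_cases hs : 1 ≤ s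
    · exact ⟨s, φ, hs, hφ, hσ⟩
    · have hs0 : s = 0 := by omega
      subst hs0
      haveI : IsEmpty (Fin 0) := ⟨fun t => absurd t.isLt (by omega)⟩
      refine ⟨1, fun _ => 1, le_rfl, anis_single one_ne_zero, fun σ hnz => ?_⟩
      exact not_anis_extend_left _ _ (not_anis_of_empty_left φ σ (hσ σ hnz))
  obtain ⟨s, φ, hs, hφ, hσ⟩ := hT'
  have hφnz : ∀ t, φ t ≠ 0 := fun t => anis_nonzero hφ t
  obtain ⟨d, hdnz, isoD⟩ := isom_toFin_nonzero (Sum.elim φ (hypForm k (j - 1)))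
    (fun t => by
      rcases t with t | t
      · exact hφnz t
      · show hypForm k (j-1) t ≠ 0
        rw [hypForm]
        by_cases h : t.val % 2 = 0
        · simp [h]
        · simp [h])
    (s + 2 * (j - 1)) (by simp)
  refine ⟨s + 2 * (j - 1), by omega, d, hdnz, ?_, ?_⟩
  · have hW : wittIndex k d = j - 1 := by
      refine wittIndex_eq h2 (u := φ) ?_ hφ
      exact (isoD.symm.trans (isom_comm φ (hypForm k (j-1))))
    omega
  · intro σ hnz
    have hiso := hσ σ hnz
    obtain ⟨s₂, e₂, _, hsplit⟩ := split_hyp h2 (Sum.elim φ σ)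
      (fun t => by
        rcases t with t | t
        · exact hφnz t
        · exact hnz t) hiso
    have hchain : FormIsom k (Sum.elim d σ) (Sum.elim (hypForm k j) e₂) := by
      refine FormIsom.trans (isom_sumCongr isoD.symm (FormIsom.refl σ)) ?_
      refine FormIsom.trans (isom_sumCongr (isom_comm _ _) (FormIsom.refl σ)) ?_
      refine FormIsom.trans (isom_assoc _ _ _) ?_
      refine FormIsom.trans (isom_sumCongr (FormIsom.refl (hypForm k (j-1))) hsplit) ?_
      refine FormIsom.trans (isom_assoc _ _ _).symm ?_
      refine isom_sumCongr ?_ (FormIsom.refl e₂)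
      exact (hyp_add (j-1) 1).symm.trans (hyp_congr (by omega))
    exact le_wittIndex hchain

lemma T_of_P (h2 : (2:k) ≠ 0) (i j : ℕ) (hi : 1 ≤ i) (hj : 1 ≤ j) (hP : Pprop k i j) :
    Tprop k i := by
  obtain ⟨n, hn, d, hd, hw, hs⟩ := hP
  obtain ⟨w, s', u, hu, isoW⟩ := witt_decomp h2 d hd
  have hWd : wittIndex k d = w := wittIndex_eq h2 isoW hu
  refine ⟨s', u, hu, fun σ hnz => ?_⟩
  intro hA
  have hiso : FormIsom k (Sum.elim d σ) (Sum.elim (hypForm k w) (Sum.elim u σ)) :=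
    (isom_sumCongr isoW (FormIsom.refl σ)).trans (isom_assoc _ _ _)
  have hW2 : wittIndex k (Sum.elim d σ) = w := wittIndex_eq h2 hiso hA
  have := hs σ hnz
  omega

lemma P_trans (h2 : (2:k) ≠ 0) {i j i' j' : ℕ} (hi : 1 ≤ i) (hj : 1 ≤ j)
    (hi' : 1 ≤ i') (hj' : 1 ≤ j') (hP : Pprop k i j) : Pprop k i' j' :=
  P_of_T h2 i' j' hi' hj' (T_one_to i' hi' (T_to_one i hi (T_of_P h2 i j hi hj hP)))

end M17
/-- **Proposition (all-or-nothing for infinite refined m-invariants).**  Let `k` be a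
field of characteristic ≠ 2.  Then there are integers `i*, j* ≥ 1` with
`m_{i*,j*}(k) = ∞` if and only if `m_{i,j}(k) = ∞` for all integers `i, j ≥ 1`. -/
theorem statement17 (k : Type) [Field k] (hchar : ringChar k ≠ 2) :
    (∃ istar jstar : ℕ, 1 ≤ istar ∧ 1 ≤ jstar ∧ mInv k istar jstar = ⊤) ↔
      (∀ i j : ℕ, 1 ≤ i → 1 ≤ j → mInv k i j = ⊤) := by
  have h2 : (2:k) ≠ 0 := Ring.two_ne_zero hchar
  constructor
  · rintro ⟨i0, j0, hi0, hj0, htop⟩ i j hi hj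
    rw [M17.mInv_eq_top_iff] at htop ⊢
    intro hP
    exact htop (M17.P_trans h2 hi hj hi0 hj0 hP)
  · intro h
    exact ⟨1, 1, le_rfl, le_rfl, h 1 1 le_rfl le_rfl⟩
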